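/- A continued fraction n_k - 1/(n_{k-1} - 1/(... - 1/n_1)) in which all entries n_1,...,n_k are nonzero even integers has absolute value strictly greater than 1. -/

import Mathlib

/-- Evaluation of the continued fraction `n_k - 1/(n_{k-1} - 1/(⋯ - 1/n_1))`,
where the list is `[n_k, n_{k-1}, …, n_1]` (outermost entry first). -/
def cfEval : List ℤ → ℚ
  | [] => 0
  | n :: l => (n : ℚ) - (cfEval l)⁻¹

theorem stmt2 (l : List ℤ) (hne : l ≠ [])
    (h : ∀ n ∈ l, Even n ∧ n ≠ 0) :
    1 < |cfEval l| := by
  induction l with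
  | nil => exact absurd rfl hne
  | cons n l ih =>
    obtain ⟨hev, hn0⟩ := h n List.mem_cons_self
    have hn2 : (2 : ℚ) ≤ |(n : ℚ)| := by
      have : (2 : ℤ) ≤ |n| := by
        obtain ⟨k, rfl⟩ := hev
        rcases abs_cases (k + k) with ⟨h1, _⟩ | ⟨h1, _⟩ <;> omega
      calc (2:ℚ) = ((2:ℤ):ℚ) := by norm_num
        _ ≤ ((|n|:ℤ):ℚ) := by exact_mod_cast this
        _ = |(n:ℚ)| := by push_cast; rfl
    have hinv : |(cfEval l)⁻¹| < 1 := by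
      rcases eq_or_ne l [] with rfl | hl
      · simp [cfEval]
      · have := ih hl (fun m hm => h m (List.mem_cons_of_mem _ hm))
        rw [abs_inv]
        rw [inv_lt_one_iff₀]
        right; exact this
    have : 1 < |(n : ℚ)| - |(cfEval l)⁻¹| := by linarith
    calc 1 < |(n : ℚ)| - |(cfEval l)⁻¹| := this
      _ ≤ |(n : ℚ) - (cfEval l)⁻¹| := abs_sub_abs_le_abs_sub _ _
      _ = |cfEval (n :: l)| := rfl
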